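/- arXiv:1203.2209 — 2 statements merged into one kernel-verified Lean document; each statement's English description precedes it below -/
import Mathlib

section
/- For every integer k ≥ 3, there exists a unique μ* > 0 at which h_k(μ) = μ e^μ / f_{k−1}(μ) attains its infimum over μ > 0, and this μ* is the unique positive solution of μ^{k−1}/(k−2)! = f_{k−1}(μ). -/
open Real Finset

noncomputable def fTail (j : ℕ) (x : ℝ) : ℝ :=
  Real.exp x - ∑ i ∈ Finset.range j, x ^ i / (Nat.factorial i : ℝ)

noncomputable def hFun (k : ℕ) (μ : ℝ) : ℝ := μ * Real.exp μ / fTail (k - 1) μ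

lemma hasDerivAt_fTail (j : ℕ) (x : ℝ) : HasDerivAt (fTail (j+1)) (fTail j x) x := by
  have hsum : HasDerivAt (fun y : ℝ => ∑ i ∈ Finset.range (j+1), y ^ i / (Nat.factorial i : ℝ))
      (∑ i ∈ Finset.range (j+1), (i : ℝ) * x ^ (i-1) / (Nat.factorial i : ℝ)) x :=
    HasDerivAt.fun_sum fun i _ => (hasDerivAt_pow i x).div_const _
  have h := (Real.hasDerivAt_exp x).sub hsum
  have hval : Real.exp x - ∑ i ∈ Finset.range (j+1), (i : ℝ) * x ^ (i-1) / (Nat.factorial i : ℝ)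
      = fTail j x := by
    unfold fTail
    congr 1
    rw [Finset.sum_range_succ']
    simp only [Nat.cast_zero, Nat.cast_succ, Nat.factorial_succ, pow_zero, Nat.cast_mul]
    have : ∀ i ∈ Finset.range j,
        ((i : ℝ) + 1) * x ^ (i + 1 - 1) / (((i : ℝ) + 1) * (Nat.factorial i : ℝ))
          = x ^ i / (Nat.factorial i : ℝ) := by
      intro i _
      have h1 : ((i : ℝ) + 1) ≠ 0 := by positivity
      field_simp
      simp
    rw [Finset.sum_congr rfl this]
    simp
  exact hval ▸ h

lemma fTail_zero (j : ℕ) : fTail (j+1) 0 = 0 := by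
  unfold fTail
  rw [Finset.sum_eq_single 0]
  · simp
  · intro i _ hi
    rw [zero_pow hi]; simp
  · simp

lemma fTail_succ_eq (j : ℕ) (x : ℝ) :
    fTail j x = fTail (j+1) x + x ^ j / (Nat.factorial j : ℝ) := by
  unfold fTail
  rw [Finset.sum_range_succ]
  ring

lemma differentiable_fTail (j : ℕ) : Differentiable ℝ (fTail (j+1)) :=
  fun x => (hasDerivAt_fTail j x).differentiableAt

lemma fTail_pos : ∀ (j : ℕ) {x : ℝ}, 0 < x → 0 < fTail j x := by
  intro j
  induction j with
  | zero =>
    intro x hx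
    unfold fTail
    simpa using Real.exp_pos x
  | succ j ih =>
    intro x hx
    have hmono : StrictMonoOn (fTail (j+1)) (Set.Ici 0) := by
      apply strictMonoOn_of_deriv_pos (convex_Ici 0)
        (differentiable_fTail j).continuous.continuousOn
      intro y hy
      rw [interior_Ici] at hy
      rw [(hasDerivAt_fTail j y).deriv]
      exact ih hy
    have := hmono (Set.self_mem_Ici) (Set.mem_Ici.2 hx.le) hx
    rwa [fTail_zero] at this

noncomputable def Pfun (j : ℕ) (x : ℝ) : ℝ := x * fTail j x - (j+1) * fTail (j+1) x

lemma Pfun_zero (j : ℕ) : Pfun j 0 = 0 := by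
  unfold Pfun
  rw [fTail_zero]
  ring

lemma hasDerivAt_Pfun_succ (j : ℕ) (x : ℝ) :
    HasDerivAt (Pfun (j+1)) (Pfun j x) x := by
  have h := ((hasDerivAt_id x).mul (hasDerivAt_fTail j x)).sub
    ((hasDerivAt_fTail (j+1) x).const_mul ((j:ℝ)+1+1))
  have heq : (1 * fTail (j+1) x + x * fTail j x) - ((j:ℝ)+1+1) * fTail (j+1) x
      = Pfun j x := by
    unfold Pfun
    ring
  have : Pfun (j+1) = fun y => y * fTail (j+1) y - ((j:ℝ)+1+1) * fTail (j+2) y := by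
    funext y; unfold Pfun; push_cast; ring
  rw [this]
  exact heq ▸ h

lemma Pfun_pos : ∀ (j : ℕ) {x : ℝ}, 0 < x → 0 < Pfun j x := by
  intro j
  induction j with
  | zero =>
    intro x hx
    have hd : ∀ y : ℝ, HasDerivAt (Pfun 0) (y * Real.exp y) x → True := fun _ _ => trivial
    have hder : ∀ y : ℝ, HasDerivAt (Pfun 0) (y * Real.exp y) y := by
      intro y
      have hexp : HasDerivAt (fTail 0) (Real.exp y) y := by
        have h0 : fTail 0 = Real.exp := by funext z; unfold fTail; simp
        rw [h0]; exact Real.hasDerivAt_exp y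
      have h := ((hasDerivAt_id y).mul hexp).sub
        ((hasDerivAt_fTail 0 y).const_mul (1:ℝ))
      have hf0 : fTail 0 y = Real.exp y := by unfold fTail; simp
      have heq : (1 * fTail 0 y + y * Real.exp y) - (1:ℝ) * fTail 0 y = y * Real.exp y := by
        rw [hf0]; ring
      have hP : Pfun 0 = fun z => z * fTail 0 z - (1:ℝ) * fTail (0+1) z := by
        funext z; unfold Pfun; push_cast; ring_nf
      rw [hP]
      exact heq ▸ h
    have hmono : StrictMonoOn (Pfun 0) (Set.Ici 0) := by
      apply strictMonoOn_of_deriv_pos (convex_Ici 0)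
        (fun y _ => ((hder y).differentiableAt.continuousAt).continuousWithinAt)
      intro y hy
      rw [interior_Ici] at hy
      rw [(hder y).deriv]
      exact mul_pos hy (Real.exp_pos y)
    have := hmono Set.self_mem_Ici (Set.mem_Ici.2 hx.le) hx
    rwa [Pfun_zero] at this
  | succ j ih =>
    intro x hx
    have hmono : StrictMonoOn (Pfun (j+1)) (Set.Ici 0) := by
      apply strictMonoOn_of_deriv_pos (convex_Ici 0)
        (fun y _ => ((hasDerivAt_Pfun_succ j y).differentiableAt.continuousAt).continuousWithinAt)
      intro y hy
      rw [interior_Ici] at hy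
      rw [(hasDerivAt_Pfun_succ j y).deriv]
      exact ih hy
    have := hmono Set.self_mem_Ici (Set.mem_Ici.2 hx.le) hx
    rwa [Pfun_zero] at this

lemma hasDerivAt_G (j : ℕ) {x : ℝ} (hx : x ≠ 0) :
    HasDerivAt (fun y : ℝ => fTail (j+1) y / y ^ (j+1))
      ((fTail j x * x ^ (j+1) - fTail (j+1) x * (((j:ℝ)+1) * x ^ j)) / (x ^ (j+1)) ^ 2) x := by
  have h := (hasDerivAt_fTail j x).div (hasDerivAt_pow (j+1) x) (pow_ne_zero _ hx)
  convert h using 2 <;> first | rfl | (push_cast; ring) | (push_cast; simp)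

lemma G_strictMono (j : ℕ) :
    StrictMonoOn (fun y : ℝ => fTail (j+1) y / y ^ (j+1)) (Set.Ioi 0) := by
  apply strictMonoOn_of_deriv_pos (convex_Ioi 0)
  · intro y hy
    exact ((hasDerivAt_G j (ne_of_gt hy)).differentiableAt.continuousAt).continuousWithinAt
  · intro y hy
    rw [interior_Ioi] at hy
    rw [(hasDerivAt_G j (ne_of_gt hy)).deriv]
    have hnum : fTail j y * y ^ (j+1) - fTail (j+1) y * (((j:ℝ)+1) * y ^ j)
        = y ^ j * Pfun j y := by
      unfold Pfun
      ring
    rw [hnum]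
    exact div_pos (mul_pos (pow_pos hy j) (Pfun_pos j hy)) (pow_pos (pow_pos hy _) 2)

lemma fTail_one_lt (n : ℕ) :
    fTail (n+2) 1 < 1 ^ (n+2) / (Nat.factorial (n+1) : ℝ) := by
  have hb := Real.exp_bound' (by norm_num : (0:ℝ) ≤ 1) (le_refl (1:ℝ))
    (by omega : 0 < n + 2)
  have h1 : fTail (n+2) 1 ≤ 1 ^ (n+2) * ((n:ℝ)+2+1) / ((Nat.factorial (n+2) : ℝ) * ((n:ℝ)+2)) := by
    unfold fTail
    have := sub_le_iff_le_add'.2 hb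
    push_cast at hb ⊢
    linarith [hb]
  refine lt_of_le_of_lt h1 ?_
  have hF : (0:ℝ) < (Nat.factorial (n+1) : ℝ) := by positivity
  have hfac : (Nat.factorial (n+2) : ℝ) = ((n:ℝ)+2) * (Nat.factorial (n+1) : ℝ) := by
    rw [Nat.factorial_succ]; push_cast; ring
  rw [hfac, div_lt_div_iff₀ (by positivity) hF]
  simp only [one_pow]
  nlinarith [mul_pos hF (show (0:ℝ) < (n:ℝ)^2+3*(n:ℝ)+1 by positivity)]


lemma fTail_big_gt (n : ℕ) :
    (((n:ℝ)+2)^2) ^ (n+2) / (Nat.factorial (n+1) : ℝ) < fTail (n+2) (((n:ℝ)+2)^2) := by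
  set b : ℝ := ((n:ℝ)+2)^2 with hbdef
  have hb0 : (0:ℝ) < b := by positivity
  have hsum := Real.sum_le_exp_of_nonneg hb0.le (n+4)
  have hlow : b ^ (n+2) / (Nat.factorial (n+2) : ℝ) + b ^ (n+3) / (Nat.factorial (n+3) : ℝ)
      ≤ fTail (n+2) b := by
    unfold fTail
    rw [Finset.sum_range_succ, Finset.sum_range_succ] at hsum
    have : n + 2 + 1 = n + 3 := by omega
    rw [this] at hsum
    linarith
  refine lt_of_lt_of_le ?_ hlow
  have hF : (0:ℝ) < (Nat.factorial (n+1) : ℝ) := by positivity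
  have hc : (0:ℝ) < b ^ (n+2) := by positivity
  have hf2 : (Nat.factorial (n+2) : ℝ) = ((n:ℝ)+2) * (Nat.factorial (n+1) : ℝ) := by
    rw [Nat.factorial_succ]; push_cast; ring
  have hf3 : (Nat.factorial (n+3) : ℝ)
      = ((n:ℝ)+3) * (((n:ℝ)+2) * (Nat.factorial (n+1) : ℝ)) := by
    rw [Nat.factorial_succ, Nat.factorial_succ]; push_cast; ring
  have hb3 : b ^ (n+3) = b ^ (n+2) * b := by rw [pow_succ]
  rw [hf2, hf3, hb3, hbdef]
  set N : ℝ := (n:ℝ) with hN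
  set F : ℝ := (Nat.factorial (n+1) : ℝ) with hFd
  set c : ℝ := ((N+2)^2) ^ (n+2) with hcd
  have h2 : (0:ℝ) < N + 2 := by positivity
  have h3 : (0:ℝ) < N + 3 := by positivity
  rw [div_add_div _ _ (by positivity) (by positivity), div_lt_div_iff₀ hF (by positivity)]
  ring_nf
  have hN0 : (0:ℝ) ≤ N := Nat.cast_nonneg n
  have hM : (0:ℝ) < F^2*(4+N*4+N^2)^n := by
    apply mul_pos (pow_pos hF 2)
    apply pow_pos
    nlinarith
  have hpoly : (0:ℝ) < 32+80*N+80*N^2+40*N^3+10*N^4+N^5 := by nlinarith [pow_nonneg hN0 2, pow_nonneg hN0 3, pow_nonneg hN0 4, pow_nonneg hN0 5]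
  nlinarith [mul_pos hM hpoly, mul_pos hc (pow_pos hF 2), mul_nonneg (mul_pos hc (pow_pos hF 2)).le hN0]

lemma exists_crit (n : ℕ) :
    ∃ c : ℝ, 0 < c ∧
      fTail (n+2) c = c ^ (n+2) / (Nat.factorial (n+1) : ℝ) ∧
      (∀ x : ℝ, 0 < x → x < c → fTail (n+2) x < x ^ (n+2) / (Nat.factorial (n+1) : ℝ)) ∧
      (∀ x : ℝ, c < x → x ^ (n+2) / (Nat.factorial (n+1) : ℝ) < fTail (n+2) x) := by
  set G : ℝ → ℝ := fun y => fTail (n+2) y / y ^ (n+2) with hGdef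
  have hGmono : StrictMonoOn G (Set.Ioi 0) := G_strictMono (n+1)
  set b : ℝ := ((n:ℝ)+2)^2 with hbdef
  have hb1 : (1:ℝ) ≤ b := by nlinarith [Nat.cast_nonneg (α := ℝ) n]
  have hb0 : (0:ℝ) < b := by positivity
  have hF : (0:ℝ) < (Nat.factorial (n+1) : ℝ) := by positivity
  have hG1 : G 1 < 1 / (Nat.factorial (n+1) : ℝ) := by
    have := fTail_one_lt n
    simpa [hGdef] using this
  have hGb : 1 / (Nat.factorial (n+1) : ℝ) < G b := by
    have h := fTail_big_gt n
    rw [hGdef]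
    rw [lt_div_iff₀ (by positivity)]
    rw [div_lt_iff₀ hF] at h
    calc 1 / (Nat.factorial (n+1) : ℝ) * b ^ (n+2)
        = b ^ (n+2) / (Nat.factorial (n+1) : ℝ) := by ring
      _ < fTail (n+2) b := fTail_big_gt n
  have hGcont : ContinuousOn G (Set.Icc 1 b) := by
    intro y hy
    have hy0 : (0:ℝ) < y := lt_of_lt_of_le one_pos hy.1
    exact ((hasDerivAt_G (n+1) (ne_of_gt hy0)).differentiableAt.continuousAt).continuousWithinAt
  have hmem : 1 / (Nat.factorial (n+1) : ℝ) ∈ Set.Icc (G 1) (G b) :=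
    ⟨hG1.le, hGb.le⟩
  obtain ⟨c, hcI, hGc⟩ := intermediate_value_Icc hb1 hGcont hmem
  have hc0 : (0:ℝ) < c := lt_of_lt_of_le one_pos hcI.1
  have hcIoi : c ∈ Set.Ioi (0:ℝ) := hc0
  refine ⟨c, hc0, ?_, ?_, ?_⟩
  · have : fTail (n+2) c / c ^ (n+2) = 1 / (Nat.factorial (n+1) : ℝ) := hGc
    rw [div_eq_div_iff (by positivity) hF.ne'] at this
    rw [eq_div_iff hF.ne']
    linarith
  · intro x hx0 hxc
    have := hGmono (Set.mem_Ioi.2 hx0) hcIoi hxc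
    rw [hGc] at this
    have h2 : fTail (n+2) x / x ^ (n+2) < 1 / (Nat.factorial (n+1) : ℝ) := this
    rw [div_lt_div_iff₀ (by positivity) hF] at h2
    rw [lt_div_iff₀ hF]
    linarith
  · intro x hcx
    have hx0 : (0:ℝ) < x := hc0.trans hcx
    have := hGmono hcIoi (Set.mem_Ioi.2 hx0) hcx
    rw [hGc] at this
    have h2 : 1 / (Nat.factorial (n+1) : ℝ) < fTail (n+2) x / x ^ (n+2) := this
    rw [div_lt_div_iff₀ hF (by positivity)] at h2
    rw [div_lt_iff₀ hF]
    linarith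

lemma hasDerivAt_H (n : ℕ) {x : ℝ} (hx : 0 < x) :
    HasDerivAt (fun y : ℝ => y * Real.exp y / fTail (n+2) y)
      (Real.exp x * (fTail (n+2) x - x ^ (n+2) / (Nat.factorial (n+1) : ℝ))
        / (fTail (n+2) x) ^ 2) x := by
  have hne : fTail (n+2) x ≠ 0 := (fTail_pos (n+2) hx).ne'
  have h := ((hasDerivAt_id x).mul (Real.hasDerivAt_exp x)).div
    (hasDerivAt_fTail (n+1) x) hne
  convert h using 1 <;> try rfl
  simp only [id_eq, Pi.mul_apply]
  rw [fTail_succ_eq (n+1) x]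
  ring

/-- for `k ≥ 3`, there is a unique `μ* > 0` at which `h_k` attains its
infimum over `(0, ∞)`, and this `μ*` is also the unique positive solution of
`μ^{k-1}/(k-2)! = f_{k-1}(μ)`. -/
theorem hFun_unique_minimizer (k : ℕ) (hk : 3 ≤ k) :
    (∃! μ : ℝ, 0 < μ ∧ ∀ x : ℝ, 0 < x → hFun k μ ≤ hFun k x) ∧
    (∀ μ : ℝ, 0 < μ →
      ((∀ x : ℝ, 0 < x → hFun k μ ≤ hFun k x) ↔
        μ ^ (k - 1) / (Nat.factorial (k - 2) : ℝ) = fTail (k - 1) μ)) := by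
  obtain ⟨n, rfl⟩ : ∃ n, k = n + 3 := ⟨k - 3, by omega⟩
  have hk1 : n + 3 - 1 = n + 2 := rfl
  have hk2 : n + 3 - 2 = n + 1 := rfl
  have hHeq : hFun (n+3) = fun y : ℝ => y * Real.exp y / fTail (n+2) y := rfl
  obtain ⟨c, hc0, hceq, hlt, hgt⟩ := exists_crit n
  have hF : (0:ℝ) < (Nat.factorial (n+1) : ℝ) := by positivity
  -- monotonicity on the two sides
  have hanti : StrictAntiOn (hFun (n+3)) (Set.Ioc 0 c) := by
    rw [hHeq]
    apply strictAntiOn_of_deriv_neg (convex_Ioc 0 c)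
    · intro y hy
      exact ((hasDerivAt_H n hy.1).differentiableAt.continuousAt).continuousWithinAt
    · intro y hy
      rw [interior_Ioc] at hy
      rw [(hasDerivAt_H n hy.1).deriv]
      apply div_neg_of_neg_of_pos
      · apply mul_neg_of_pos_of_neg (Real.exp_pos y)
        have := hlt y hy.1 hy.2
        linarith
      · exact pow_pos (fTail_pos (n+2) hy.1) 2
  have hmono : StrictMonoOn (hFun (n+3)) (Set.Ici c) := by
    rw [hHeq]
    apply strictMonoOn_of_deriv_pos (convex_Ici c)
    · intro y hy
      exact ((hasDerivAt_H n (hc0.trans_le hy)).differentiableAt.continuousAt).continuousWithinAt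
    · intro y hy
      rw [interior_Ici] at hy
      have hy0 : 0 < y := hc0.trans hy
      rw [(hasDerivAt_H n hy0).deriv]
      apply div_pos
      · apply mul_pos (Real.exp_pos y)
        have := hgt y hy
        linarith
      · exact pow_pos (fTail_pos (n+2) hy0) 2
  have hmin : ∀ x : ℝ, 0 < x → x ≠ c → hFun (n+3) c < hFun (n+3) x := by
    intro x hx0 hne
    rcases lt_or_gt_of_ne hne with h | h
    · exact hanti ⟨hx0, h.le⟩ ⟨hc0, le_refl c⟩ h
    · exact hmono (Set.self_mem_Ici) (Set.mem_Ici.2 h.le) h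
  have hcmin : ∀ x : ℝ, 0 < x → hFun (n+3) c ≤ hFun (n+3) x := by
    intro x hx0
    rcases eq_or_ne x c with rfl | hne
    · exact le_refl _
    · exact (hmin x hx0 hne).le
  have huniq : ∀ μ : ℝ, 0 < μ → (∀ x : ℝ, 0 < x → hFun (n+3) μ ≤ hFun (n+3) x) → μ = c := by
    intro μ hμ0 hμmin
    by_contra hne
    have h1 := hmin μ hμ0 hne
    have h2 := hμmin c hc0
    linarith
  constructor
  · exact ⟨c, ⟨hc0, hcmin⟩, fun μ ⟨hμ0, hμmin⟩ => huniq μ hμ0 hμmin⟩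
  · intro μ hμ0
    constructor
    · intro hμmin
      have : μ = c := huniq μ hμ0 hμmin
      subst this
      rw [hk1, hk2]
      exact hceq.symm
    · intro heq
      rw [hk1, hk2] at heq
      have : μ = c := by
        rcases lt_trichotomy μ c with h | h | h
        · have := hlt μ hμ0 h
          linarith
        · exact h
        · have := hgt μ h
          linarith
      subst this
      exact hcmin
end

section
/- Let n' ≥ n − log n, and let g_1 ≥ g_2 ≥ … ≥ g_{n'} ≥ 0 be integers with even sum, g_1 ≤ n^{1/4}, and at most k·log n of the g_j equal to 0, where k ≥ 3 is a fixed integer. If n is large enough that n − n^{1/4} − k·log n > √n, then there exists a simple graph on n' vertices with degree sequence (g_1, …, g_{n'}). -/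
open Real Finset

set_option linter.unusedSectionVars false
open Finset

def EGC (len : ℕ) (d : ℕ → ℕ) : Prop :=
  ∀ l, 1 ≤ l → l ≤ len →
    ∑ i ∈ range l, d i ≤ l * (l-1) + ∑ j ∈ Ico l len, min l (d j)

def cnt (M : ℕ) (h : ℕ → ℕ) (t : ℕ) : ℕ := ((range M).filter (fun i => t ≤ h i)).card

def redv (_M : ℕ) (h : ℕ → ℕ) (r : ℕ) : ℕ := h (r-1)
def redP (M : ℕ) (h : ℕ → ℕ) (r : ℕ) : ℕ := cnt M h (redv M h r + 1)
def redc (M : ℕ) (h : ℕ → ℕ) (r : ℕ) : ℕ := cnt M h (redv M h r) - redP M h r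
def redu (M : ℕ) (h : ℕ → ℕ) (r : ℕ) : ℕ := redP M h r + redc M h r - r
def redT (M : ℕ) (h : ℕ → ℕ) (r : ℕ) : Finset ℕ :=
  range (redP M h r) ∪ Ico (redP M h r + redu M h r) (redP M h r + redc M h r)
def redF (M : ℕ) (h : ℕ → ℕ) (r : ℕ) : ℕ → ℕ :=
  fun i => h i - (if i ∈ redT M h r then 1 else 0)

lemma cnt_le' (M : ℕ) (h : ℕ → ℕ) (t : ℕ) : cnt M h t ≤ M := by
  have := Finset.card_filter_le (range M) (fun i => t ≤ h i)
  simpa [cnt] using this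

lemma cnt_mono' (M : ℕ) (h : ℕ → ℕ) {s t : ℕ} (hst : s ≤ t) : cnt M h t ≤ cnt M h s := by
  apply Finset.card_le_card
  intro x hx
  simp only [mem_filter] at *
  exact ⟨hx.1, le_trans hst hx.2⟩

lemma lt_cnt_iff {M : ℕ} {h : ℕ → ℕ} (hh : Antitone h) {t : ℕ} {i : ℕ} (hi : i < M) :
    i < cnt M h t ↔ t ≤ h i := by
  constructor
  · intro hlt
    by_contra hc
    push_neg at hc
    have hsub : (range M).filter (fun j => t ≤ h j) ⊆ range i := by
      intro j hj
      simp only [mem_filter, mem_range] at *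
      by_contra hji
      push_neg at hji
      exact absurd (le_trans hj.2 (hh hji)) (not_le.2 hc)
    have := Finset.card_le_card hsub
    simp only [card_range] at this
    exact absurd (lt_of_lt_of_le hlt this) (lt_irrefl i)
  · intro ht
    have hsub : range (i+1) ⊆ (range M).filter (fun j => t ≤ h j) := by
      intro j hj
      simp only [mem_range] at hj
      simp only [mem_filter, mem_range]
      exact ⟨lt_of_lt_of_le hj hi, le_trans ht (hh (by omega))⟩
    have := Finset.card_le_card hsub
    simpa [cnt] using this

lemma cnt_ge_iff {M : ℕ} {h : ℕ → ℕ} (hh : Antitone h) {t : ℕ} {i : ℕ} (hi : i < M) :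
    cnt M h t ≤ i ↔ h i < t := by
  constructor
  · intro hle
    by_contra hc
    push_neg at hc
    exact absurd ((lt_cnt_iff hh hi).2 hc) (not_lt.2 hle)
  · intro hlt
    by_contra hc
    push_neg at hc
    exact absurd ((lt_cnt_iff hh hi).1 hc) (not_le.2 hlt)

section RedFacts

variable {M : ℕ} {h : ℕ → ℕ} {r : ℕ}
variable (hh : Antitone h) (hz : ∀ i, M ≤ i → h i = 0)
variable (hr1 : 1 ≤ r) (hrc : r ≤ cnt M h 1)

include hh hz hr1 hrc

lemma red_rM : r ≤ M := le_trans hrc (cnt_le' M h 1)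

lemma red_b3 : r ≤ redP M h r + redc M h r := by
  have hrm : r ≤ M := red_rM hh hz hr1 hrc
  have h1 : r - 1 < M := by omega
  have h2 : r - 1 < cnt M h (redv M h r) := (lt_cnt_iff hh h1).2 (le_refl _)
  have h3 : redP M h r ≤ cnt M h (redv M h r) := cnt_mono' M h (by omega)
  unfold redc
  omega

lemma red_b2 : redP M h r < r := by
  have hrm : r ≤ M := red_rM hh hz hr1 hrc
  have h1 : r - 1 < M := by omega
  have h2 : cnt M h (redv M h r + 1) ≤ r - 1 := (cnt_ge_iff hh h1).2 (by unfold redv; omega)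
  unfold redP
  omega

lemma red_b1 : 1 ≤ redv M h r := by
  by_contra hc
  push_neg at hc
  have hv0 : redv M h r = 0 := by omega
  have h1 : redP M h r = cnt M h 1 := by unfold redP; rw [hv0]
  have h2 := red_b2 hh hz hr1 hrc
  omega

lemma red_PcM : redP M h r + redc M h r ≤ M := by
  have h3 : redP M h r ≤ cnt M h (redv M h r) := cnt_mono' M h (by omega)
  have := cnt_le' M h (redv M h r)
  unfold redc
  omega

lemma red_b5 : ∀ i, i < redP M h r → redv M h r + 1 ≤ h i := by
  intro i hi
  have hpc := red_PcM hh hz hr1 hrc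
  have hiM : i < M := by omega
  exact (lt_cnt_iff hh hiM).1 hi

lemma red_b6 : ∀ i, redP M h r ≤ i → i < redP M h r + redc M h r → h i = redv M h r := by
  intro i hi1 hi2
  have hiM : i < M := lt_of_lt_of_le hi2 (red_PcM hh hz hr1 hrc)
  have h1 : h i < redv M h r + 1 := (cnt_ge_iff hh hiM).1 hi1
  have h3 : redP M h r ≤ cnt M h (redv M h r) := cnt_mono' M h (by omega)
  have h2 : redv M h r ≤ h i := by
    apply (lt_cnt_iff hh hiM).1
    unfold redc at hi2
    omega
  omega

lemma red_b7 : ∀ i, redP M h r + redc M h r ≤ i → h i < redv M h r := by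
  intro i hi
  have hb1 := red_b1 hh hz hr1 hrc
  rcases lt_or_ge i M with hiM | hiM
  · apply (cnt_ge_iff hh hiM).1
    have h3 : redP M h r ≤ cnt M h (redv M h r) := cnt_mono' M h (by omega)
    unfold redc at hi
    omega
  · rw [hz i hiM]
    omega

lemma red_memT : ∀ i, i ∈ redT M h r ↔
    (i < redP M h r ∨ (redP M h r + redu M h r ≤ i ∧ i < redP M h r + redc M h r)) := by
  intro i
  simp [redT, mem_union, mem_range, mem_Ico]

lemma red_Tsub : redT M h r ⊆ range M := by
  intro i hi
  rw [red_memT hh hz hr1 hrc] at hi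
  rw [mem_range]
  have := red_PcM hh hz hr1 hrc
  omega

lemma red_cardT : (redT M h r).card = r := by
  have hdisj : Disjoint (range (redP M h r))
      (Ico (redP M h r + redu M h r) (redP M h r + redc M h r)) := by
    rw [Finset.disjoint_left]
    intro a ha hb
    rw [mem_range] at ha
    rw [mem_Ico] at hb
    omega
  have hb2 := red_b2 hh hz hr1 hrc
  have hb3 := red_b3 hh hz hr1 hrc
  rw [redT, Finset.card_union_of_disjoint hdisj, card_range, Nat.card_Ico]
  unfold redu
  omega

lemma red_hpos : ∀ i, i ∈ redT M h r → 1 ≤ h i := by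
  intro i hi
  rw [red_memT hh hz hr1 hrc] at hi
  have hb1 := red_b1 hh hz hr1 hrc
  rcases hi with hi | hi
  · have := red_b5 hh hz hr1 hrc i hi
    omega
  · have := red_b6 hh hz hr1 hrc i (by omega) hi.2
    omega

lemma red_step : ∀ i, h i = redF M h r i + (if i ∈ redT M h r then 1 else 0) := by
  intro i
  unfold redF
  by_cases hi : i ∈ redT M h r
  · have := red_hpos hh hz hr1 hrc i hi
    simp [hi]
    omega
  · simp [hi]

lemma red_zero : ∀ i, M ≤ i → redF M h r i = 0 := by
  intro i hi
  unfold redF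
  rw [hz i hi]
  simp

lemma red_antitone : Antitone (redF M h r) := by
  have hb1 := red_b1 hh hz hr1 hrc
  have hb5 := red_b5 hh hz hr1 hrc
  have hb6 := red_b6 hh hz hr1 hrc
  have hb7 := red_b7 hh hz hr1 hrc
  have hmem := red_memT hh hz hr1 hrc
  apply antitone_nat_of_succ_le
  intro i
  have hmi := hmem i
  have hmi1 := hmem (i+1)
  have hmono : h (i+1) ≤ h i := hh (Nat.le_succ i)
  unfold redF
  rcases lt_or_ge i (redP M h r) with c1 | c1
  · -- i < P, so i ∈ T, f' i = h i - 1 ≥ v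
    have hiT : i ∈ redT M h r := (hmi).2 (Or.inl c1)
    have hvi : redv M h r + 1 ≤ h i := hb5 i c1
    rcases lt_or_ge (i+1) (redP M h r) with c2 | c2
    · have hi1T : (i+1) ∈ redT M h r := (hmi1).2 (Or.inl c2)
      simp [hiT, hi1T]
      omega
    · -- f'(i+1) ≤ v
      have hub : redF M h r (i+1) ≤ redv M h r := by
        unfold redF
        rcases lt_or_ge (i+1) (redP M h r + redc M h r) with c3 | c3
        · have := hb6 (i+1) c2 c3
          omega
        · have := hb7 (i+1) c3
          omega
      unfold redF at hub
      simp only [hiT, if_pos]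
      omega
  · rcases lt_or_ge i (redP M h r + redc M h r) with c2 | c2
    · have hvi : h i = redv M h r := hb6 i c1 c2
      have hub1 : h (i+1) ≤ redv M h r := by
        rcases lt_or_ge (i+1) (redP M h r + redc M h r) with c3 | c3
        · exact le_of_eq (hb6 (i+1) (by omega) c3)
        · exact le_of_lt (hb7 (i+1) c3)
      rcases lt_or_ge i (redP M h r + redu M h r) with c3 | c3
      · -- i ∉ T, f' i = v
        have hiT : i ∉ redT M h r := by
          rw [hmi]
          omega
        simp only [hiT, if_neg, not_false_iff]
        omega
      · -- i ∈ T, f' i = v - 1; show f'(i+1) ≤ v - 1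
        have hiT : i ∈ redT M h r := (hmi).2 (Or.inr ⟨c3, c2⟩)
        have hub2 : redF M h r (i+1) ≤ redv M h r - 1 := by
          unfold redF
          rcases lt_or_ge (i+1) (redP M h r + redc M h r) with c4 | c4
          · have hi1T : (i+1) ∈ redT M h r := (hmi1).2 (Or.inr ⟨by omega, c4⟩)
            have := hb6 (i+1) (by omega) c4
            simp [hi1T]
            omega
          · have := hb7 (i+1) c4
            omega
        unfold redF at hub2
        simp only [hiT, if_pos]
        omega
    · -- i ≥ P + c: both ∉ T
      have hiT : i ∉ redT M h r := by rw [hmi]; omega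
      have hi1T : (i+1) ∉ redT M h r := by rw [hmi1]; omega
      simp [hiT, hi1T]
      omega

lemma red_sum (s : Finset ℕ) :
    (∑ i ∈ s, redF M h r i) + (s ∩ redT M h r).card = ∑ i ∈ s, h i := by
  have hcard : (s ∩ redT M h r).card = ∑ i ∈ s, (if i ∈ redT M h r then 1 else 0) := by
    rw [← Finset.filter_mem_eq_inter]
    exact Finset.card_filter _ _
  rw [hcard, ← Finset.sum_add_distrib]
  apply Finset.sum_congr rfl
  intro i _
  exact (red_step hh hz hr1 hrc i).symm

lemma red_card_inter {l : ℕ} (hl : l ≤ redP M h r + redc M h r) :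
    (redT M h r ∩ range l).card
      = min l (redP M h r) + (l - (redP M h r + redu M h r)) := by
  have heq : redT M h r ∩ range l
      = range (min l (redP M h r)) ∪ Ico (redP M h r + redu M h r) l := by
    ext i
    rw [Finset.mem_inter, red_memT hh hz hr1 hrc]
    simp only [mem_range, mem_union, mem_Ico, lt_min_iff]
    omega
  rw [heq]
  have hdisj : Disjoint (range (min l (redP M h r))) (Ico (redP M h r + redu M h r) l) := by
    rw [Finset.disjoint_left]
    intro a ha hb
    rw [mem_range, lt_min_iff] at ha
    rw [mem_Ico] at hb
    omega
  rw [Finset.card_union_of_disjoint hdisj, card_range, Nat.card_Ico]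

end RedFacts

/-- The purely arithmetic inequality behind the "direct" case of EG preservation. -/
lemma direct_ineq (l P v r u w D T0 : ℤ)
    (h1 : 0 ≤ P) (h2 : P + 1 ≤ v) (h3 : v ≤ l) (h4 : P < l)
    (h5 : l ≤ r) (h6 : 1 ≤ u) (h8 : D ≤ P * r) (h10 : 0 ≤ D) (h9 : 0 ≤ T0)
    (hw : (w = l - P - u ∧ 0 ≤ w) ∨ (w = 0 ∧ l ≤ P + u))
    (hpar : Even (r + D + (r + u - P) * v + T0)) :
    D + (2 * (l - P) - (r + u - P)) * v ≤ l * (l - 1) + 2 * P + 2 * w + T0 - r := by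
  have hDr : D ≤ P * r := h8
  rcases eq_or_lt_of_le h2 with hv | hv
  · -- v = P + 1
    subst hv
    -- reduce to (2l-P-u)(P+1) ≤ l(l-1)+2P+2w+T0 - (l*l - l ... )
    have hw0 : 0 ≤ w := by rcases hw with ⟨_, hh⟩ | ⟨hh, _⟩ <;> omega
    rcases eq_or_lt_of_le (by linarith : (1:ℤ) ≤ l) with hl1 | hl2
    · -- l = 1 corner: P = 0, v = 1, u = 1 or u ≥ 2
      have hP0 : P = 0 := by omega
      have hD0 : D = 0 := by
        subst hP0
        simp at h8
        omega
      subst hP0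
      rcases eq_or_lt_of_le h6 with hu1 | hu2
      · -- u = 1 : parity
        have hT0 : Odd T0 := by
          rcases hpar with ⟨m, hm⟩
          refine ⟨T0/2 + (T0 % 2 - 1)/2, by omega⟩ <;> omega
        have : 1 ≤ T0 := by
          rcases hT0 with ⟨m, hm⟩
          omega
        rw [← hl1, ← hu1, hD0]
        ring_nf
        linarith [this, hw0]
      · rw [← hl1, hD0]
        nlinarith [h9, hw0, hu2]
    · -- l ≥ 2
      rcases hw with ⟨hw1, hw2⟩ | ⟨hw1, hw2⟩
      · -- w = l - P - u
        subst hw1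
        nlinarith [mul_nonneg (by linarith : (0:ℤ) ≤ l - P - u) (by linarith : (0:ℤ) ≤ u - 1),
          mul_nonneg (by linarith : (0:ℤ) ≤ l - P - u) (by linarith : (0:ℤ) ≤ l - P - u),
          mul_nonneg (by linarith : (0:ℤ) ≤ u - 1) (by linarith : (0:ℤ) ≤ l - 2),
          h9, mul_nonneg (by linarith : (0:ℤ) ≤ P) (by linarith : (0:ℤ) ≤ r - l)]
      · -- w = 0, l ≤ P + u
        subst hw1
        nlinarith [mul_nonneg (by linarith : (0:ℤ) ≤ l - 2) (by linarith : (0:ℤ) ≤ l - P),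
          mul_nonneg (by linarith : (0:ℤ) ≤ P + 1) (by linarith : (0:ℤ) ≤ P + u - l),
          h9, mul_nonneg (by linarith : (0:ℤ) ≤ P) (by linarith : (0:ℤ) ≤ r - l)]
  · -- v ≥ P + 2
    have hr : r * (P + 1 - v) ≤ l * (P + 1 - v) :=
      mul_le_mul_of_nonpos_right h5 (by linarith)
    rcases hw with ⟨hw1, hw2⟩ | ⟨hw1, hw2⟩
    · subst hw1
      rcases le_or_gt 2 u with hu2 | hu2
      · nlinarith [mul_nonneg (by linarith : (0:ℤ) ≤ l) (by linarith : (0:ℤ) ≤ u - 2),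
          mul_nonneg (by linarith : (0:ℤ) ≤ l - P - u) (by linarith : (0:ℤ) ≤ l - v),
          h9, hr]
      · have hu1 : u = 1 := by omega
        subst hu1
        nlinarith [mul_nonneg (by linarith : (0:ℤ) ≤ l - P - 1) (by linarith : (0:ℤ) ≤ l - v),
          h9, hr]
    · subst hw1
      nlinarith [mul_nonpos_of_nonpos_of_nonneg (by linarith : l - P - u ≤ 0) (by linarith : (0:ℤ) ≤ v),
        mul_nonneg (by linarith : (0:ℤ) ≤ l) (by linarith : (0:ℤ) ≤ l - 2 - P),
        h9, hr]

lemma sum_Ico_shift (F : ℕ → ℕ) (a b : ℕ) :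
    ∑ j ∈ Finset.Ico (a+1) (b+1), F j = ∑ j ∈ Finset.Ico a b, F (j+1) := by
  have : Finset.Ico (a+1) (b+1)
      = Finset.map ⟨fun x => x + 1, fun x y hxy => by simpa using hxy⟩ (Finset.Ico a b) := by
    ext x
    simp only [Finset.mem_Ico, Finset.mem_map, Function.Embedding.coeFn_mk]
    constructor
    · intro hx; exact ⟨x - 1, by omega, show x - 1 + 1 = x by omega⟩
    · rintro ⟨y, hy, rfl⟩; show a + 1 ≤ y + 1 ∧ y + 1 < b + 1; omega
  rw [this, Finset.sum_map]
  rfl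

lemma leaf2a_i (l P c r F HL : ℤ) (h1 : F + l = HL) (h2 : HL ≤ l * r)
    (h3 : r ≤ P + c) (h7 : 1 ≤ l) :
    F ≤ l * (l-1) + (P + c - l) * l := by
  nlinarith [mul_le_mul_of_nonneg_left h3 (by linarith : (0:ℤ) ≤ l)]

lemma leaf2a_ii (l P c r v F D W : ℤ) (h0 : 0 ≤ W) (h1 : F + (P + W) = D + (l - P) * v)
    (h2 : D ≤ P * r) (h3 : l ≤ r) (h4 : r ≤ P + c) (h5 : P < l) (h6 : v ≤ r - 1)
    (h7 : 1 ≤ l) (h8 : 0 ≤ P) :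
    F ≤ l * (l-1) + (P + c - l) * l := by
  nlinarith [mul_nonneg (by linarith : (0:ℤ) ≤ l - P) (by linarith : (0:ℤ) ≤ r - 1 - v),
    mul_nonneg (by linarith : (0:ℤ) ≤ l) (by linarith : (0:ℤ) ≤ P + c - r)]

lemma leaf2a_iii (l c r u F W : ℤ) (h1 : F + W = l * r) (hc : c = r + u)
    (hw : (W = l - u ∧ 0 ≤ W) ∨ (W = 0 ∧ l ≤ u)) (h3 : l ≤ r) (h6 : 0 ≤ u) (h7 : 1 ≤ l) :
    F ≤ l * (l-1) + (c - l) * l := by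
  rcases eq_or_lt_of_le h6 with hu0 | hu1
  · rcases hw with ⟨hw1, _⟩ | ⟨hw1, hw2⟩ <;> nlinarith [hw1]
  · have hW : 0 ≤ W := by rcases hw with ⟨_, h⟩ | ⟨h, _⟩ <;> omega
    nlinarith [mul_le_mul_of_nonneg_left (by linarith : r ≤ c - 1) (by linarith : (0:ℤ) ≤ l)]

section RedEGC

open Finset

variable {M : ℕ} {h : ℕ → ℕ} {r : ℕ}
variable (hh : Antitone h) (hz : ∀ i, M ≤ i → h i = 0)
variable (hr1 : 1 ≤ r) (hrc : r ≤ cnt M h 1)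

include hh hz hr1 hrc

set_option maxHeartbeats 2000000 in
lemma red_EGC (hhr : ∀ i, h i ≤ r)
    (hEGh : ∀ μ, μ ≤ M →
      r + ∑ i ∈ range μ, h i ≤ (μ+1)*μ + ∑ j ∈ Ico μ M, min (μ+1) (h j))
    (hpar : Even (r + ∑ i ∈ range M, h i)) :
    EGC M (redF M h r) := by
  intro l hl1 hlM
  -- abbreviations
  set v := redv M h r with hv
  set P := redP M h r with hP
  set c := redc M h r with hc
  set u := redu M h r with hu
  set T := redT M h r with hT
  have hb1 : 1 ≤ v := red_b1 hh hz hr1 hrc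
  have hb2 : P < r := red_b2 hh hz hr1 hrc
  have hb3 : r ≤ P + c := red_b3 hh hz hr1 hrc
  have hPcM : P + c ≤ M := red_PcM hh hz hr1 hrc
  have hb5 := red_b5 hh hz hr1 hrc
  have hb6 := red_b6 hh hz hr1 hrc
  have hb7 := red_b7 hh hz hr1 hrc
  have hmem := red_memT hh hz hr1 hrc
  have hTsub : T ⊆ range M := red_Tsub hh hz hr1 hrc
  have hcardT : T.card = r := red_cardT hh hz hr1 hrc
  have hfle : ∀ i, redF M h r i ≤ h i := by
    intro i
    unfold redF
    omega
  have hfge : ∀ i, h i ≤ redF M h r i + 1 := by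
    intro i
    unfold redF
    by_cases hm : i ∈ redT M h r <;> simp [hm]
    have := red_hpos hh hz hr1 hrc i hm
    omega
  rcases lt_or_ge r l with hcase1 | hcase2
  · -- Case 1 : l ≥ r + 1, trivial
    have hb : ∀ i ∈ range l, redF M h r i ≤ l - 1 := by
      intro i _
      have := hfle i
      have := hhr i
      omega
    calc ∑ i ∈ range l, redF M h r i ≤ ∑ _i ∈ range l, (l-1) := Finset.sum_le_sum hb
      _ = l * (l-1) := by rw [Finset.sum_const, card_range, smul_eq_mul]
      _ ≤ l * (l-1) + ∑ j ∈ Ico l M, min l (redF M h r j) := Nat.le_add_right _ _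
  · -- l ≤ r
    have hlPc : l ≤ P + c := le_trans hcase2 hb3
    have hsuml := red_sum hh hz hr1 hrc (range l)
    have hcardl : (range l ∩ T).card = min l P + (l - (P + u)) := by
      rw [Finset.inter_comm]
      exact red_card_inter hh hz hr1 hrc hlPc
    rcases lt_or_ge l v with hva | hvb
    · -- Case 2a : v ≥ l + 1
      have htail : (P + c - l) * l ≤ ∑ j ∈ Ico l M, min l (redF M h r j) := by
        have hsub : Ico l (P+c) ⊆ Ico l M := Finset.Ico_subset_Ico (le_refl _) hPcM
        have h1 : ∀ j ∈ Ico l (P+c), min l (redF M h r j) = l := by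
          intro j hj
          rw [mem_Ico] at hj
          have hfj : v ≤ redF M h r j + 1 := by
            have := hfge j
            rcases lt_or_ge j P with hjP | hjP
            · have := hb5 j hjP
              omega
            · have := hb6 j hjP hj.2
              omega
          have : l ≤ redF M h r j := by omega
          omega
        calc (P + c - l) * l = ∑ j ∈ Ico l (P+c), l := by
              rw [Finset.sum_const, Nat.card_Ico, smul_eq_mul]
          _ = ∑ j ∈ Ico l (P+c), min l (redF M h r j) := (Finset.sum_congr rfl h1).symm
          _ ≤ ∑ j ∈ Ico l M, min l (redF M h r j) :=
              Finset.sum_le_sum_of_subset hsub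
      have hgoal2 : ∑ i ∈ range l, redF M h r i ≤ l * (l-1) + (P + c - l) * l := by
        rcases le_or_gt l P with hlP | hlP
        · -- l ≤ P
          have hca : (range l ∩ T).card = l := by
            rw [hcardl]
            omega
          have hHL : ∑ i ∈ range l, h i ≤ l * r := by
            calc ∑ i ∈ range l, h i ≤ ∑ _i ∈ range l, r := Finset.sum_le_sum (fun i _ => hhr i)
              _ = l * r := by rw [Finset.sum_const, card_range, smul_eq_mul]
          rw [hca] at hsuml
          zify [hl1, hlPc]
          apply leaf2a_i (l:ℤ) (P:ℤ) (c:ℤ) (r:ℤ) _ ((∑ i ∈ range l, h i : ℕ) : ℤ)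
          · exact_mod_cast hsuml
          · exact_mod_cast hHL
          · exact_mod_cast hb3
          · exact_mod_cast hl1
        · -- P < l
          have hca : (range l ∩ T).card = P + (l - (P + u)) := by
            rw [hcardl]
            omega
          -- HL = D + (l-P)*v
          have hsplit : ∑ i ∈ range l, h i
              = ∑ i ∈ range P, h i + (l - P) * v := by
            rw [Finset.range_eq_Ico, ← Finset.sum_Ico_consecutive h (Nat.zero_le P) (le_of_lt hlP),
              ← Finset.range_eq_Ico]
            congr 1
            calc ∑ i ∈ Ico P l, h i = ∑ _i ∈ Ico P l, v := Finset.sum_congr rfl (fun i hi => by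
                  rw [mem_Ico] at hi
                  exact hb6 i hi.1 (by omega))
              _ = (l - P) * v := by rw [Finset.sum_const, Nat.card_Ico, smul_eq_mul]
          have hD : ∑ i ∈ range P, h i ≤ P * r := by
            calc ∑ i ∈ range P, h i ≤ ∑ _i ∈ range P, r := Finset.sum_le_sum (fun i _ => hhr i)
              _ = P * r := by rw [Finset.sum_const, card_range, smul_eq_mul]
          rw [hca] at hsuml
          rw [hsplit] at hsuml
          rcases lt_or_ge v r with hvr | hvr
          · -- v ≤ r - 1
            zify [hl1, hlPc]
            apply leaf2a_ii (l:ℤ) (P:ℤ) (c:ℤ) (r:ℤ) (v:ℤ) _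
              ((∑ i ∈ range P, h i : ℕ) : ℤ) ((l - (P+u) : ℕ):ℤ) (by positivity)
            · have hz1 := congrArg (fun t : ℕ => (t:ℤ)) hsuml
              push_cast [le_of_lt hlP] at hz1
              push_cast
              linarith [hz1]
            · exact_mod_cast hD
            · exact_mod_cast hcase2
            · exact_mod_cast hb3
            · exact_mod_cast hlP
            · have : v + 1 ≤ r := hvr
              zify at this
              linarith
            · exact_mod_cast hl1
            · positivity
          · -- v = r, P = 0
            have hveq : v = r := le_antisymm (by
              have := hhr (r-1)
              simpa [hv, redv] using this) hvr
            have hP0 : P = 0 := by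
              by_contra hc0
              have h0P : 0 < P := Nat.pos_of_ne_zero hc0
              have := hb5 0 h0P
              have := hhr 0
              omega
            have hcu : c = r + u := by
              have h9 : u = P + c - r := rfl
              omega
            rw [hP0] at hsuml
            simp only [Finset.range_zero, Finset.sum_empty, Nat.zero_add, Nat.sub_zero,
              zero_add] at hsuml
            have hgoalz : (∑ i ∈ range l, redF M h r i : ℤ) ≤ (l:ℤ) * ((l:ℤ)-1) + ((c:ℤ) - (l:ℤ)) * (l:ℤ) := by
              apply leaf2a_iii (l:ℤ) (c:ℤ) (r:ℤ) (u:ℤ) _ ((l - u : ℕ) : ℤ)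
              · have hz1 := congrArg (fun t : ℕ => (t:ℤ)) hsuml
                rw [hveq] at hz1
                push_cast at hz1
                push_cast
                linarith [hz1]
              · exact_mod_cast hcu
              · rcases le_or_gt u l with huu | huu
                · left
                  constructor
                  · push_cast [huu]
                    ring
                  · positivity
                · right
                  constructor
                  · zify at huu ⊢
                    omega
                  · exact_mod_cast le_of_lt huu
              · exact_mod_cast hcase2
              · positivity
              · exact_mod_cast hl1
            zify [hl1, hlPc]
            rw [hP0]
            push_cast
            push_cast at hgoalz
            linarith [hgoalz]
      omega
    · -- Case 2b : v ≤ l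
      have hstep := red_step hh hz hr1 hrc
      rcases le_or_gt l P with hlP | hlP
      · -- 2b-i : l ≤ P, counting argument
        have hca : (range l ∩ T).card = l := by
          rw [hcardl]
          omega
        rw [hca] at hsuml
        have hEG := hEGh l hlM
        have hpt : ∀ j ∈ Ico l M, min (l+1) (h j) ≤ min l (redF M h r j)
            + ((if l + 1 ≤ h j then 1 else 0) + (if j ∈ T ∧ h j ≤ l then 1 else 0)) := by
          intro j hj
          rw [mem_Ico] at hj
          by_cases hbig : l + 1 ≤ h j
          · have h1 : min (l+1) (h j) = l + 1 := min_eq_left hbig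
            have h2 : l ≤ redF M h r j := by
              have := hfge j
              omega
            have h3 : min l (redF M h r j) = l := min_eq_left h2
            have h4 : ¬ (j ∈ T ∧ h j ≤ l) := by
              rintro ⟨_, hcon⟩
              omega
            rw [h1, h3, if_pos hbig, if_neg h4]
          · push_neg at hbig
            have h1 : min (l+1) (h j) = h j := min_eq_right (by omega)
            have h2 : min l (redF M h r j) = redF M h r j := min_eq_right (by
              have := hfle j
              omega)
            rw [h1, h2, if_neg (by omega : ¬ l + 1 ≤ h j)]
            by_cases hjT : j ∈ T
            · have hst := hstep j
              rw [if_pos hjT] at hst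
              rw [if_pos (by exact ⟨hjT, by omega⟩ : j ∈ T ∧ h j ≤ l)]
              omega
            · have hst := hstep j
              rw [if_neg hjT] at hst
              rw [if_neg (by rintro ⟨hcon, _⟩; exact hjT hcon)]
              omega
        have hsum2 : ∑ j ∈ Ico l M, min (l+1) (h j)
            ≤ (∑ j ∈ Ico l M, min l (redF M h r j))
              + (((Ico l M).filter (fun j => l+1 ≤ h j)).card
                + ((Ico l M).filter (fun j => j ∈ T ∧ h j ≤ l)).card) := by
          calc ∑ j ∈ Ico l M, min (l+1) (h j)
              ≤ ∑ j ∈ Ico l M, (min l (redF M h r j)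
                + ((if l + 1 ≤ h j then 1 else 0) + (if j ∈ T ∧ h j ≤ l then 1 else 0))) :=
                Finset.sum_le_sum hpt
            _ = _ := by
                rw [Finset.sum_add_distrib, Finset.sum_add_distrib,
                  ← Finset.card_filter, ← Finset.card_filter]
        have hBE : ((Ico l M).filter (fun j => l+1 ≤ h j)).card
            + ((Ico l M).filter (fun j => j ∈ T ∧ h j ≤ l)).card ≤ r - l := by
          have hdisj : Disjoint ((Ico l M).filter (fun j => l+1 ≤ h j))
              ((Ico l M).filter (fun j => j ∈ T ∧ h j ≤ l)) := by
            rw [Finset.disjoint_left]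
            intro a ha hb
            rw [mem_filter] at ha hb
            omega
          have hsubBE : ((Ico l M).filter (fun j => l+1 ≤ h j))
              ∪ ((Ico l M).filter (fun j => j ∈ T ∧ h j ≤ l)) ⊆ T ∩ Ico l M := by
            intro a ha
            rw [Finset.mem_union, mem_filter, mem_filter] at ha
            rw [Finset.mem_inter]
            rcases ha with ⟨ha1, ha2⟩ | ⟨ha1, ha2⟩
            · refine ⟨(hmem a).2 (Or.inl ?_), ha1⟩
              have haM : a < M := (mem_Ico.1 ha1).2
              exact (lt_cnt_iff hh haM).2 (by omega)
            · exact ⟨ha2.1, ha1⟩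
          have hcardTI : (T ∩ Ico l M).card + l = r := by
            have hun : (range l ∩ T) ∪ (T ∩ Ico l M) = T := by
              ext x
              simp only [Finset.mem_union, Finset.mem_inter, mem_range, mem_Ico]
              constructor
              · rintro (⟨_, hx⟩ | ⟨hx, _⟩) <;> exact hx
              · intro hx
                have hxM : x < M := mem_range.1 (hTsub hx)
                rcases lt_or_ge x l with hxl | hxl
                · exact Or.inl ⟨hxl, hx⟩
                · exact Or.inr ⟨hx, hxl, hxM⟩
            have hdisj2 : Disjoint (range l ∩ T) (T ∩ Ico l M) := by
              rw [Finset.disjoint_left]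
              intro a ha hb
              rw [Finset.mem_inter, mem_range] at ha
              rw [Finset.mem_inter, mem_Ico] at hb
              omega
            have := Finset.card_union_of_disjoint hdisj2
            rw [hun, hca, hcardT] at this
            omega
          calc _ = (((Ico l M).filter (fun j => l+1 ≤ h j))
              ∪ ((Ico l M).filter (fun j => j ∈ T ∧ h j ≤ l))).card :=
                (Finset.card_union_of_disjoint hdisj).symm
            _ ≤ (T ∩ Ico l M).card := Finset.card_le_card hsubBE
            _ ≤ r - l := by omega
        have hid : (l+1)*l = l*(l-1) + 2*l := by
          zify [hl1]
          ring
        omega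
      · -- 2b-ii/iii : P < l
        have hca : (range l ∩ T).card = P + (l - (P + u)) := by
          rw [hcardl]
          omega
        rw [hca] at hsuml
        have hjv : ∀ j, P ≤ j → h j ≤ v := by
          intro j hjP
          rcases lt_or_ge j (P+c) with h1 | h1
          · exact le_of_eq (hb6 j hjP h1)
          · exact le_of_lt (hb7 j h1)
        have hTeq : ∑ j ∈ Ico l M, min l (redF M h r j) = ∑ j ∈ Ico l M, redF M h r j := by
          apply Finset.sum_congr rfl
          intro j hj
          rw [mem_Ico] at hj
          apply min_eq_right
          have h1 := hfle j
          have h2 := hjv j (by omega)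
          omega
        have htot : (∑ i ∈ range M, redF M h r i) + r = ∑ i ∈ range M, h i := by
          have := red_sum hh hz hr1 hrc (range M)
          rw [Finset.inter_eq_right.2 hTsub, hcardT] at this
          exact this
        have hsplitM : (∑ i ∈ range l, redF M h r i) + (∑ j ∈ Ico l M, redF M h r j)
            = ∑ i ∈ range M, redF M h r i := by
          rw [Finset.range_eq_Ico, Finset.range_eq_Ico]
          exact Finset.sum_Ico_consecutive _ (Nat.zero_le l) hlM
        rw [hTeq]
        rcases Nat.eq_zero_or_pos u with hu0 | hu1
        · -- 2b-ii : u = 0, equality form of EG(l+1)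
          have hEG := hEGh l hlM
          have htl2 : ∑ j ∈ Ico l M, min (l+1) (h j) = ∑ j ∈ Ico l M, h j := by
            apply Finset.sum_congr rfl
            intro j hj
            rw [mem_Ico] at hj
            apply min_eq_right
            have := hjv j (by omega)
            omega
          rw [htl2] at hEG
          have hsplitH : (∑ i ∈ range l, h i) + (∑ j ∈ Ico l M, h j) = ∑ i ∈ range M, h i := by
            rw [Finset.range_eq_Ico, Finset.range_eq_Ico]
            exact Finset.sum_Ico_consecutive _ (Nat.zero_le l) hlM
          have hid : (l+1)*l = l*(l-1) + 2*l := by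
            zify [hl1]
            ring
          rw [hu0] at hsuml
          omega
        · -- 2b-iii : u ≥ 1
          rcases le_or_gt v P with hvP | hvP
          · -- Route B : v ≤ P, equality form of EG(l)
            have hl1M : l - 1 ≤ M := by omega
            have hEG := hEGh (l-1) hl1M
            have hll : l - 1 + 1 = l := by omega
            rw [hll] at hEG
            have htl2 : ∑ j ∈ Ico (l-1) M, min l (h j) = ∑ j ∈ Ico (l-1) M, h j := by
              apply Finset.sum_congr rfl
              intro j hj
              rw [mem_Ico] at hj
              apply min_eq_right
              have := hjv j (by omega)
              omega
            rw [htl2] at hEG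
            have hsplitH : (∑ i ∈ range (l-1), h i) + (∑ j ∈ Ico (l-1) M, h j)
                = ∑ i ∈ range M, h i := by
              rw [Finset.range_eq_Ico, Finset.range_eq_Ico]
              exact Finset.sum_Ico_consecutive _ (Nat.zero_le (l-1)) hl1M
            have hHL : ∑ i ∈ range l, h i = (∑ i ∈ range (l-1), h i) + h (l-1) := by
              conv_lhs => rw [show l = (l-1) + 1 by omega]
              rw [Finset.sum_range_succ]
            have hhl : h (l-1) ≤ v := hjv (l-1) (by omega)
            have hmul : l * (l-1) = (l-1+1) * (l-1) := by rw [hll]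
            omega
          · -- DIRECT case : P < v
            -- HL = D + (l-P)*v
            have hsplit : ∑ i ∈ range l, h i
                = ∑ i ∈ range P, h i + (l - P) * v := by
              rw [Finset.range_eq_Ico,
                ← Finset.sum_Ico_consecutive h (Nat.zero_le P) (le_of_lt hlP),
                ← Finset.range_eq_Ico]
              congr 1
              calc ∑ i ∈ Ico P l, h i = ∑ _i ∈ Ico P l, v := Finset.sum_congr rfl (fun i hi => by
                    rw [mem_Ico] at hi
                    exact hb6 i hi.1 (by omega))
                _ = (l - P) * v := by rw [Finset.sum_const, Nat.card_Ico, smul_eq_mul]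
            have hsplitHM : ∑ i ∈ range M, h i
                = ∑ i ∈ range P, h i + c * v + ∑ j ∈ Ico (P+c) M, h j := by
              rw [Finset.range_eq_Ico,
                ← Finset.sum_Ico_consecutive h (Nat.zero_le (P+c)) hPcM,
                ← Finset.sum_Ico_consecutive h (Nat.zero_le P) (Nat.le_add_right P c),
                ← Finset.range_eq_Ico]
              congr 2
              calc ∑ i ∈ Ico P (P+c), h i = ∑ _i ∈ Ico P (P+c), v :=
                    Finset.sum_congr rfl (fun i hi => by
                      rw [mem_Ico] at hi
                      exact hb6 i hi.1 hi.2)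
                _ = c * v := by rw [Finset.sum_const, Nat.card_Ico, smul_eq_mul, Nat.add_sub_cancel_left]
            have hD : ∑ i ∈ range P, h i ≤ P * r := by
              calc ∑ i ∈ range P, h i ≤ ∑ _i ∈ range P, r := Finset.sum_le_sum (fun i _ => hhr i)
                _ = P * r := by rw [Finset.sum_const, card_range, smul_eq_mul]
            have hcu : c + P = r + u := by
              have h9 : u = P + c - r := rfl
              omega
            -- cast everything to ℤ and use direct_ineq
            have hdz : ((∑ i ∈ range P, h i : ℕ) : ℤ) + (2 * ((l:ℤ) - P) - ((r:ℤ) + u - P)) * v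
                ≤ (l:ℤ) * (l - 1) + 2 * P + 2 * ((l - (P+u) : ℕ) : ℤ)
                  + ((∑ j ∈ Ico (P+c) M, h j : ℕ) : ℤ) - r := by
              apply direct_ineq
              · positivity
              · exact_mod_cast hvP
              · exact_mod_cast hvb
              · exact_mod_cast hlP
              · exact_mod_cast hcase2
              · exact_mod_cast hu1
              · calc ((∑ i ∈ range P, h i : ℕ) : ℤ) ≤ ((P * r : ℕ) : ℤ) := by exact_mod_cast hD
                  _ = (P:ℤ) * r := by push_cast; ring
              · positivity
              · positivity
              · rcases le_or_gt (P+u) l with hPul | hPul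
                · left
                  constructor
                  · push_cast [hPul]
                    ring
                  · positivity
                · right
                  constructor
                  · have : l - (P+u) = 0 := by omega
                    rw [this]
                    rfl
                  · exact_mod_cast le_of_lt hPul
              · have hcz : (c:ℤ) = (r:ℤ) + u - P := by
                  have := congrArg (fun t : ℕ => (t:ℤ)) hcu
                  push_cast at this
                  linarith
                have hev : Even ((r + ∑ i ∈ range M, h i : ℕ) : ℤ) := by
                  exact_mod_cast hpar
                have heq : ((r + ∑ i ∈ range M, h i : ℕ) : ℤ)
                    = (r:ℤ) + ((∑ i ∈ range P, h i : ℕ) : ℤ) + ((r:ℤ) + u - P) * v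
                      + ((∑ j ∈ Ico (P+c) M, h j : ℕ) : ℤ) := by
                  rw [← hcz]
                  push_cast [hsplitHM]
                  ring
                rw [heq] at hev
                exact hev
            -- now conclude
            have hzl : ((∑ i ∈ range l, redF M h r i : ℕ) : ℤ)
                + ((P:ℤ) + ((l - (P+u) : ℕ) : ℤ))
                = ((∑ i ∈ range P, h i : ℕ) : ℤ) + ((l:ℤ) - P) * v := by
              have hz1 := congrArg (fun t : ℕ => (t:ℤ)) hsuml
              rw [hsplit] at hz1
              push_cast [le_of_lt hlP] at hz1
              push_cast
              linarith
            have hzG : ((∑ i ∈ range l, redF M h r i : ℕ) : ℤ)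
                + ((∑ j ∈ Ico l M, redF M h r j : ℕ) : ℤ) + r
                = ((∑ i ∈ range P, h i : ℕ) : ℤ) + (c:ℤ) * v
                  + ((∑ j ∈ Ico (P+c) M, h j : ℕ) : ℤ) := by
              have hz2 := congrArg (fun t : ℕ => (t:ℤ)) htot
              rw [← hsplitM, hsplitHM] at hz2
              push_cast at hz2 ⊢
              linarith
            have hcz : (c:ℤ) = (r:ℤ) + u - P := by
              have := congrArg (fun t : ℕ => (t:ℤ)) hcu
              push_cast at this
              linarith
            zify [hl1]
            rw [hcz] at hzG
            push_cast at hdz hzl hzG ⊢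
            linarith [hdz, hzl, hzG]

end RedEGC
open Finset

/-- A degree sequence (given as a function on ℕ, read on `range len`) is graphical. -/
def NGraphical (len : ℕ) (d : ℕ → ℕ) : Prop :=
  ∃ G : SimpleGraph (Fin len), ∃ _ : DecidableRel G.Adj, ∀ i : Fin len, G.degree i = d (i : ℕ)

lemma ngraphical_of_zero (len : ℕ) (d : ℕ → ℕ) (h : ∀ i, i < len → d i = 0) :
    NGraphical len d := by
  refine ⟨⊥, SimpleGraph.Bot.adjDecidable _, fun i => ?_⟩
  rw [SimpleGraph.bot_degree, h i i.isLt]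

section Extend

variable {M : ℕ} (G' : SimpleGraph (Fin M)) [DecidableRel G'.Adj] (T : Finset ℕ)

/-- extend a graph by a new vertex 0 joined to (the successors of) `T`. -/
def extGraph : SimpleGraph (Fin (M+1)) where
  Adj a b := Fin.cases (Fin.cases False (fun j => (j : ℕ) ∈ T) b)
    (fun i => Fin.cases ((i : ℕ) ∈ T) (fun j => G'.Adj i j) b) a
  symm := by
    refine ⟨fun a b => ?_⟩
    refine Fin.cases ?_ ?_ a <;> [skip; intro i] <;>
      refine Fin.cases ?_ ?_ b <;> simp [G'.adj_comm]
  loopless := by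
    refine ⟨fun a => ?_⟩
    refine Fin.cases ?_ ?_ a <;> simp

instance : DecidableRel (extGraph G' T).Adj := by
  intro a b
  unfold extGraph
  refine Fin.cases ?_ ?_ a <;> [skip; intro i] <;>
    refine Fin.cases ?_ ?_ b <;> simp <;> infer_instance

lemma extGraph_degree_zero (hT : T ⊆ range M) :
    (extGraph G' T).degree (0 : Fin (M+1)) = T.card := by
  rw [SimpleGraph.degree, SimpleGraph.neighborFinset_eq_filter, Finset.card_filter,
    Fin.sum_univ_succ]
  have h0 : (extGraph G' T).Adj 0 0 = False := rfl
  rw [show (if (extGraph G' T).Adj 0 0 then 1 else 0) = 0 by simp [h0]]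
  have hs : ∀ j : Fin M, (extGraph G' T).Adj 0 j.succ = ((j : ℕ) ∈ T) := fun j => rfl
  simp only [hs, zero_add]
  rw [Fin.sum_univ_eq_sum_range (fun j => if j ∈ T then 1 else 0) M]
  rw [← Finset.card_filter]
  congr 1
  rw [Finset.filter_mem_eq_inter, Finset.inter_eq_right.2 hT]

lemma extGraph_degree_succ (i : Fin M) :
    (extGraph G' T).degree i.succ = G'.degree i + (if (i : ℕ) ∈ T then 1 else 0) := by
  rw [SimpleGraph.degree, SimpleGraph.neighborFinset_eq_filter, Finset.card_filter,
    Fin.sum_univ_succ]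
  have h0 : (extGraph G' T).Adj i.succ 0 = ((i : ℕ) ∈ T) := rfl
  have hs : ∀ j : Fin M, (extGraph G' T).Adj i.succ j.succ = G'.Adj i j := fun j => rfl
  simp only [hs, h0]
  rw [SimpleGraph.degree, SimpleGraph.neighborFinset_eq_filter, Finset.card_filter]
  exact add_comm _ _

/-- Key extension lemma: graphicality is preserved by adding a dominating-ish vertex. -/
lemma ngraphical_extend {M : ℕ} (f' : ℕ → ℕ) (T : Finset ℕ) (hT : T ⊆ range M)
    (d : ℕ → ℕ) (hd0 : d 0 = T.card)
    (hstep : ∀ i, i < M → d (i+1) = f' i + (if i ∈ T then 1 else 0))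
    (hg : NGraphical M f') : NGraphical (M+1) d := by
  obtain ⟨G', inst, hdeg⟩ := hg
  refine ⟨extGraph G' T, inferInstance, fun a => ?_⟩
  refine Fin.cases ?_ ?_ a
  · rw [extGraph_degree_zero G' T hT]; exact hd0.symm
  · intro i
    rw [extGraph_degree_succ G' T i, hdeg i]
    have : ((i.succ : Fin (M+1)) : ℕ) = (i : ℕ) + 1 := rfl
    rw [this, hstep i i.isLt]

open Finset

lemma min_one_ite (x : ℕ) : min 1 x = if 1 ≤ x then 1 else 0 := by
  by_cases h1 : 1 ≤ x
  · rw [min_eq_left h1, if_pos h1]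
  · rw [if_neg h1]
    have : x = 0 := by omega
    rw [this]
    simp

/-- Erdős–Gallai sufficiency. -/
lemma EG_graphical (S : ℕ) : ∀ (len : ℕ) (d : ℕ → ℕ), Antitone d →
    (∀ i, len ≤ i → d i = 0) → (∑ i ∈ range len, d i = S) → Even S →
    EGC len d → NGraphical len d := by
  induction S using Nat.strong_induction_on with
  | _ S IH =>
    intro len d hd hz hsum heven hEG
    by_cases hd0 : d 0 = 0
    · apply ngraphical_of_zero
      intro i _
      have := hd (Nat.zero_le i)
      omega
    · have hr1 : 1 ≤ d 0 := Nat.pos_of_ne_zero hd0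
      set r := d 0 with hr
      -- len ≥ 1
      rcases Nat.eq_zero_or_pos len with hlen0 | hlen1
      · exact absurd (hz 0 (by omega)) hd0
      obtain ⟨M, rfl⟩ : ∃ M, len = M + 1 := ⟨len - 1, by omega⟩
      set h := fun i => d (i+1) with hh_def
      have hh : Antitone h := fun a b hab => hd (by omega : a + 1 ≤ b + 1)
      have hzh : ∀ i, M ≤ i → h i = 0 := fun i hi => hz (i+1) (by omega)
      have hhr : ∀ i, h i ≤ r := fun i => hd (Nat.zero_le (i+1))
      -- translations of EG conditions
      have hEGh : ∀ μ, μ ≤ M →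
          r + ∑ i ∈ range μ, h i ≤ (μ+1)*μ + ∑ j ∈ Ico μ M, min (μ+1) (h j) := by
        intro μ hμ
        have := hEG (μ+1) (by omega) (by omega)
        rw [Finset.sum_range_succ' d μ] at this
        have hshift : ∑ j ∈ Ico (μ+1) (M+1), min (μ+1) (d j)
            = ∑ j ∈ Ico μ M, min (μ+1) (h j) := sum_Ico_shift (fun j => min (μ+1) (d j)) μ M
        rw [hshift] at this
        simp only [Nat.add_sub_cancel] at this
        have hsc : ∑ x ∈ range μ, d (x+1) = ∑ i ∈ range μ, h i := rfl
        rw [hsc, ← hr] at this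
        omega
      have hrc : r ≤ cnt M h 1 := by
        have h1 := hEG 1 (le_refl 1) (by omega)
        rw [Finset.sum_range_one] at h1
        have hshift : ∑ j ∈ Ico 1 (M+1), min 1 (d j)
            = ∑ j ∈ Ico 0 M, min 1 (h j) := sum_Ico_shift (fun j => min 1 (d j)) 0 M
        rw [hshift] at h1
        have h2 : ∑ j ∈ Ico 0 M, min 1 (h j) = cnt M h 1 := by
          rw [← Finset.range_eq_Ico]
          unfold cnt
          rw [Finset.card_filter]
          apply Finset.sum_congr rfl
          intro j _
          exact min_one_ite (h j)
        rw [h2, ← hr] at h1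
        omega
      have hsum' : r + ∑ i ∈ range M, h i = S := by
        rw [← hsum, Finset.sum_range_succ' d M]
        have hsc : ∑ x ∈ range M, d (x+1) = ∑ i ∈ range M, h i := rfl
        rw [hsc, ← hr]
        omega
      have hpar : Even (r + ∑ i ∈ range M, h i) := by
        rw [hsum']
        exact heven
      -- the reduction
      have hEGf := red_EGC hh hzh hr1 hrc hhr hEGh hpar
      have hTsub := red_Tsub hh hzh hr1 hrc
      have hcardT := red_cardT hh hzh hr1 hrc
      have hstep := red_step hh hzh hr1 hrc
      have hsumf : (∑ i ∈ range M, redF M h r i) + r = ∑ i ∈ range M, h i := by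
        have := red_sum hh hzh hr1 hrc (range M)
        rw [Finset.inter_eq_right.2 hTsub, hcardT] at this
        exact this
      obtain ⟨k, hk⟩ := hpar
      have hS'lt : (∑ i ∈ range M, redF M h r i) < S := by omega
      have hS'even : Even (∑ i ∈ range M, redF M h r i) := by
        refine ⟨k - r, ?_⟩
        omega
      have hgf : NGraphical M (redF M h r) :=
        IH _ hS'lt M (redF M h r) (red_antitone hh hzh hr1 hrc)
          (red_zero hh hzh hr1 hrc) rfl hS'even hEGf
      -- extend
      apply ngraphical_extend (redF M h r) (redT M h r) hTsub d
      · rw [hcardT]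
      · intro i _
        exact hstep i
      · exact hgf

lemma analytic_core (n : ℕ) (Δ : ℕ) (hΔ2 : 2 ≤ Δ) (hΔA : (Δ:ℝ) ≤ (n:ℝ)^((1:ℝ)/4)) :
    ((Δ:ℝ)^2 + 4*Δ) / 4 < Real.sqrt n + (n:ℝ)^((1:ℝ)/4) - Real.log n := by
  set A : ℝ := (n:ℝ)^((1:ℝ)/4) with hA
  have hA2 : (2:ℝ) ≤ A := le_trans (by exact_mod_cast hΔ2) hΔA
  have hn0 : (0:ℝ) < n := by
    by_contra hc
    push_neg at hc
    have hn00 : (n:ℝ) = 0 := le_antisymm hc (by positivity)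
    rw [hA, hn00] at hA2
    rw [Real.zero_rpow (by norm_num)] at hA2
    linarith
  have hApos : (0:ℝ) < A := by positivity
  have hsqrt : Real.sqrt n = A^2 := by
    rw [Real.sqrt_eq_rpow, hA, ← Real.rpow_natCast ((n:ℝ)^((1:ℝ)/4)) 2,
      ← Real.rpow_mul (le_of_lt hn0)]
    norm_num
  have hlog : Real.log n = 4 * Real.log A := by
    rw [hA, Real.log_rpow hn0]
    ring
  have hlog2 : Real.log 2 < 0.6931471808 := Real.log_two_lt_d9
  rw [hsqrt, hlog]
  rcases lt_or_ge (Δ:ℝ) 4 with hΔsmall | hΔbig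
  · -- Δ = 2 or 3
    have hΔn4 : Δ < 4 := by exact_mod_cast hΔsmall
    have hlog4 : Real.log 4 = 2 * Real.log 2 := by
      rw [show (4:ℝ) = 2^2 by norm_num, Real.log_pow]
      push_cast
      ring
    interval_cases Δ
    · -- Δ = 2
      have hlogA : Real.log A ≤ A/2 - 1 + Real.log 2 := by
        have h1 : Real.log (A/2) ≤ A/2 - 1 := Real.log_le_sub_one_of_pos (by linarith)
        rw [Real.log_div (by linarith) (by norm_num)] at h1
        linarith
      push_cast
      nlinarith [sq_nonneg (A - 2), hA2, hlog2, hlogA]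
    · -- Δ = 3
      have hA3 : (3:ℝ) ≤ A := le_trans (by norm_num) hΔA
      have hlog3 : Real.log 3 ≤ 2 * Real.log 2 := by
        rw [← hlog4]
        exact Real.log_le_log (by norm_num) (by norm_num)
      have hlogA : Real.log A ≤ A/3 - 1 + Real.log 3 := by
        have h1 : Real.log (A/3) ≤ A/3 - 1 := Real.log_le_sub_one_of_pos (by linarith)
        rw [Real.log_div (by linarith) (by norm_num)] at h1
        linarith
      push_cast
      nlinarith [sq_nonneg (A - 3), hA3, hlog2, hlog3, hlogA]
  · -- Δ ≥ 4, A ≥ 4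
    have hA4 : (4:ℝ) ≤ A := le_trans hΔbig hΔA
    have hlogA : Real.log A < A - 1 :=
      Real.log_lt_sub_one_of_pos hApos (by linarith)
    nlinarith [sq_nonneg (A - 4), sq_nonneg (A - Δ), hΔA, mul_le_mul_of_nonneg_left hΔA (by positivity : (0:ℝ) ≤ (Δ:ℝ))]

lemma mX_int (l Δ m : ℤ) (h1 : Δ^2 + 4*Δ < 4*m) (h2 : 1 ≤ l) (h3 : l ≤ Δ) :
    l * (Δ + 2 - l) ≤ m := by
  have h4 : 4*(l * (Δ + 2 - l)) ≤ 4*m + 3 := by nlinarith [sq_nonneg (Δ + 2 - 2*l)]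
  omega

lemma lX_int (l Δ : ℤ) (h2 : 1 ≤ l) (h3 : l ≤ Δ) : Δ + 1 ≤ l * (Δ + 2 - l) := by
  nlinarith [mul_nonneg (by linarith : (0:ℤ) ≤ l - 1) (by linarith : (0:ℤ) ≤ Δ + 1 - l)]


/-- Lemma on graphical sequences: if `n' ≥ n - log n`, the integers
`g_1 ≥ … ≥ g_{n'} ≥ 0` have even sum, `g_1 ≤ n^{1/4}`, at most `k log n` of them are `0`,
and `n` is large enough that `n - n^{1/4} - k log n > √n`, then there is a simple graph
on `n'` vertices with degree sequence `g`. -/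
theorem exists_simpleGraph_of_degree_sequence
    (k : ℕ) (hk : 3 ≤ k) (n n' : ℕ)
    (hn' : (n : ℝ) - Real.log n ≤ (n' : ℝ))
    (g : Fin n' → ℕ) (hsorted : Antitone g)
    (heven : Even (∑ i, g i))
    (hmax : ∀ i, (g i : ℝ) ≤ (n : ℝ) ^ ((1 : ℝ) / 4))
    (hzeros : ((Finset.univ.filter fun i => g i = 0).card : ℝ) ≤ (k : ℝ) * Real.log n)
    (hbig : Real.sqrt n < (n : ℝ) - (n : ℝ) ^ ((1 : ℝ) / 4) - (k : ℝ) * Real.log n) :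
    ∃ G : SimpleGraph (Fin n'), ∃ _ : DecidableRel G.Adj, ∀ i, G.degree i = g i := by
  by_cases hn'0 : n' = 0
  · subst hn'0
    exact ⟨⊥, SimpleGraph.Bot.adjDecidable _, fun i => i.elim0⟩
  have hn'pos : 0 < n' := Nat.pos_of_ne_zero hn'0
  -- extend g to ℕ
  set gE : ℕ → ℕ := fun i => if hi : i < n' then g ⟨i, hi⟩ else 0 with hgE_def
  have hgEF : ∀ i : Fin n', gE (i : ℕ) = g i := by
    intro i
    simp only [hgE_def, i.isLt, dif_pos, Fin.eta]
  have hganti : Antitone gE := by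
    intro a b hab
    by_cases hb : b < n'
    · have ha : a < n' := lt_of_le_of_lt hab hb
      simp only [hgE_def, ha, hb, dif_pos]
      exact hsorted (show (⟨a, ha⟩ : Fin n') ≤ ⟨b, hb⟩ from hab)
    · simp only [hgE_def, hb, dif_neg, not_false_iff]
      exact Nat.zero_le _
  have hzE : ∀ i, n' ≤ i → gE i = 0 := by
    intro i hi
    simp only [hgE_def, dif_neg (by omega : ¬ i < n')]
  have hsumE : ∑ i ∈ range n', gE i = ∑ i, g i := by
    rw [← Fin.sum_univ_eq_sum_range (fun i => gE i) n']
    exact Finset.sum_congr rfl (fun i _ => hgEF i)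
  have hevenE : Even (∑ i ∈ range n', gE i) := by
    rw [hsumE]
    exact heven
  -- number of nonzero entries
  set m := cnt n' gE 1 with hm_def
  have hmn' : m ≤ n' := cnt_le' n' gE 1
  have hmlt : ∀ i, i < n' → (i < m ↔ 1 ≤ gE i) := fun i hi => lt_cnt_iff hganti hi
  have hZcard : m + (Finset.univ.filter fun i : Fin n' => g i = 0).card = n' := by
    have h1 : (Finset.univ.filter fun i : Fin n' => g i = 0).card
        = ((range n').filter (fun i => gE i = 0)).card := by
      rw [Finset.card_filter, Finset.card_filter]
      rw [← Fin.sum_univ_eq_sum_range (fun i => if gE i = 0 then 1 else 0) n']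
      apply Finset.sum_congr rfl
      intro i _
      rw [hgEF i]
    have h2 : ((range n').filter (fun i => 1 ≤ gE i)).card
        + ((range n').filter (fun i => ¬ 1 ≤ gE i)).card = n' := by
      rw [Finset.card_filter_add_card_filter_not]
      exact card_range n'
    have h3 : ((range n').filter (fun i => ¬ 1 ≤ gE i))
        = ((range n').filter (fun i => gE i = 0)) := by
      apply Finset.filter_congr
      intro i _
      constructor
      · intro hx; omega
      · intro hx; omega
    rw [h1, ← h3]
    rw [hm_def]
    unfold cnt
    omega
  -- the EG conditions hold
  have hEGC : EGC n' gE := by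
    intro l hl1 hln'
    have hΔtop : ∀ i, gE i ≤ gE 0 := fun i => hganti (Nat.zero_le i)
    set Δ := gE 0 with hΔ_def
    rcases lt_or_ge Δ l with hcase | hcase
    · calc ∑ i ∈ range l, gE i ≤ ∑ _i ∈ range l, (l-1) :=
            Finset.sum_le_sum (fun i _ => by have := hΔtop i; omega)
        _ = l * (l-1) := by rw [Finset.sum_const, card_range, smul_eq_mul]
        _ ≤ l * (l-1) + ∑ j ∈ Ico l n', min l (gE j) := Nat.le_add_right _ _
    · -- l ≤ Δ
      have hΔ1 : 1 ≤ Δ := le_trans hl1 hcase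
      have hmX : l * (Δ + 2 - l) ≤ m := by
        rcases eq_or_lt_of_le hΔ1 with hΔeq | hΔ2
        · -- Δ = 1, so l = 1; parity argument
          have hl : l = 1 := by omega
          have hsum01 : ∑ i ∈ range n', gE i = m := by
            rw [hm_def]
            unfold cnt
            rw [Finset.card_filter]
            apply Finset.sum_congr rfl
            intro i _
            have h1 := hΔtop i
            rw [← hΔeq] at h1
            by_cases h2 : 1 ≤ gE i
            · rw [if_pos h2]; omega
            · rw [if_neg h2]; omega
          have hm1 : 0 < m := by
            rw [hmlt 0 hn'pos]
            omega
          have hmeven : Even m := by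
            rw [← hsum01]
            exact hevenE
          obtain ⟨t, ht⟩ := hmeven
          rw [hl, ← hΔeq]
          omega
        · -- Δ ≥ 2, analytic
          have hΔA : (Δ:ℝ) ≤ (n:ℝ)^((1:ℝ)/4) := by
            have := hmax ⟨0, hn'pos⟩
            rw [← hgEF ⟨0, hn'pos⟩] at this
            exact this
          have hana := analytic_core n Δ hΔ2 hΔA
          have hmlow : ((n':ℝ) - (k:ℝ) * Real.log n) ≤ (m:ℝ) := by
            have hc := congrArg (fun t : ℕ => (t:ℝ)) hZcard
            push_cast at hc
            linarith [hzeros]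
          have hchain : Real.sqrt n + (n:ℝ)^((1:ℝ)/4) - Real.log n < (m:ℝ) := by
            linarith [hn', hbig, hmlow]
          have hm4R : ((Δ:ℝ)^2 + 4*Δ) < 4*(m:ℝ) := by linarith [hana, hchain]
          have hm4 : Δ^2 + 4*Δ < 4*m := by exact_mod_cast hm4R
          have hz := mX_int (l:ℤ) (Δ:ℤ) (m:ℤ) (by exact_mod_cast hm4)
            (by exact_mod_cast hl1) (by exact_mod_cast hcase)
          have hlΔ2 : l ≤ Δ + 2 := by omega
          zify [hlΔ2]
          exact hz
      have hlm : l < m := by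
        have hz := lX_int (l:ℤ) (Δ:ℤ) (by exact_mod_cast hl1) (by exact_mod_cast hcase)
        have hlΔ2 : l ≤ Δ + 2 := by omega
        zify [hlΔ2] at hmX
        have : (l:ℤ) < (m:ℤ) := by linarith
        exact_mod_cast this
      -- LHS bound
      have hLHS : ∑ i ∈ range l, gE i ≤ l * Δ := by
        calc ∑ i ∈ range l, gE i ≤ ∑ _i ∈ range l, Δ := Finset.sum_le_sum (fun i _ => hΔtop i)
          _ = l * Δ := by rw [Finset.sum_const, card_range, smul_eq_mul]
      -- tail bound
      have htail : m - l ≤ ∑ j ∈ Ico l n', min l (gE j) := by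
        have hsub : Ico l m ⊆ Ico l n' := Finset.Ico_subset_Ico (le_refl _) hmn'
        have h1 : ∀ j ∈ Ico l m, 1 ≤ min l (gE j) := by
          intro j hj
          rw [mem_Ico] at hj
          have hjn' : j < n' := lt_of_lt_of_le hj.2 hmn'
          have := (hmlt j hjn').1 hj.2
          exact le_min hl1 this
        calc m - l = ∑ _j ∈ Ico l m, 1 := by rw [Finset.sum_const, Nat.card_Ico, smul_eq_mul, mul_one]
          _ ≤ ∑ j ∈ Ico l m, min l (gE j) := Finset.sum_le_sum h1
          _ ≤ ∑ j ∈ Ico l n', min l (gE j) := Finset.sum_le_sum_of_subset hsub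
      -- combine
      have hlΔ2 : l ≤ Δ + 2 := by omega
      zify [hl1, hlΔ2, le_of_lt hlm] at hmX hLHS htail ⊢
      push_cast at hmX hLHS htail ⊢
      nlinarith [hmX, hLHS, htail]
  -- apply EG sufficiency
  obtain ⟨G, inst, hdeg⟩ := EG_graphical (∑ i ∈ range n', gE i) n' gE hganti hzE rfl hevenE hEGC
  exact ⟨G, inst, fun i => by rw [hdeg i, hgEF i]⟩
end Extend
end
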